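/- For n ≥ 0 and m ≥ 0 define F(n,m) = Σ_{j=0}^{n} a_{n−j}^{(n)}·b_{m+j}. Then for all n ≥ 2 and m ≥ 0: F(n,m) = F(n−1, m+1) + 2·F(n−1, m) − F(n−2, m). -/

import Mathlib

open Finset

/-- `a_k^{(n)} = C(2n−k+1, 2n−2k+1) + C(2n−k, 2n−2k+1)` for `n ≥ 1` and `0 ≤ k ≤ n`,
with the conventions `a_0^{(0)} = 1` and `a_k^{(n)} = 0` for `k < 0` or `k > n`. -/
def aExt (n : ℕ) (k : ℤ) : ℤ :=
  if 0 ≤ k ∧ k ≤ (n : ℤ) then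
    if n = 0 then 1
    else ((2 * n - k.toNat + 1).choose (2 * n - 2 * k.toNat + 1) : ℤ)
      + ((2 * n - k.toNat).choose (2 * n - 2 * k.toNat + 1) : ℤ)
  else 0

/-- The signed Catalan number `b_s = ((−1)^s/(s+2))·C(2s+2, s+1)` (an integer;
the division is exact). -/
def bCat (s : ℕ) : ℤ := (-1) ^ s * ((((2 * s + 2).choose (s + 1)) / (s + 2) : ℕ) : ℤ)

/-- `F(n,m) = Σ_{j=0}^{n} a_{n−j}^{(n)}·b_{m+j}`. -/
def Ffun (n m : ℕ) : ℤ := ∑ j ∈ Finset.range (n + 1), aExt n ((n : ℤ) - j) * bCat (m + j)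

lemma binom_id (a b : ℕ) :
    (a+3).choose (b+2) + a.choose (b+2)
      = (a+1).choose b + a.choose b + (a+2).choose (b+2) + (a+1).choose (b+2) := by
  have h1 : (a+3).choose (b+2) = (a+2).choose (b+1) + (a+2).choose (b+2) :=
    Nat.choose_succ_succ _ _
  have h2 : (a+2).choose (b+1) = (a+1).choose b + (a+1).choose (b+1) :=
    Nat.choose_succ_succ _ _
  have h3 : (a+1).choose (b+1) = a.choose b + a.choose (b+1) :=
    Nat.choose_succ_succ _ _
  have h4 : (a+1).choose (b+2) = a.choose (b+1) + a.choose (b+2) :=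
    Nat.choose_succ_succ _ _
  rw [h1, h2, h3, h4]; ring


lemma aExt_out (n : ℕ) (k : ℤ) (h : k < 0 ∨ (n:ℤ) < k) : aExt n k = 0 := by
  rw [aExt, if_neg]; omega

lemma aExt_coe (n k : ℕ) (hn : n ≠ 0) (hk : k ≤ n) :
    aExt n k = ((2*n - k + 1).choose (2*n - 2*k + 1) : ℤ)
      + ((2*n - k).choose (2*n - 2*k + 1) : ℤ) := by
  rw [aExt, if_pos ⟨Int.natCast_nonneg k, by exact_mod_cast hk⟩, if_neg hn,
    Int.toNat_natCast]

lemma aExt_rec (n : ℕ) (hn : 2 ≤ n) (k : ℤ) :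
    aExt n k = aExt (n-1) k + 2 * aExt (n-1) (k-1) - aExt (n-2) (k-2) := by
  rcases lt_or_ge k 0 with hneg | hpos
  · rw [aExt_out n k (Or.inl hneg), aExt_out (n-1) k (Or.inl hneg),
      aExt_out (n-1) (k-1) (Or.inl (by omega)), aExt_out (n-2) (k-2) (Or.inl (by omega))]
    ring
  rcases lt_or_ge (n:ℤ) k with hbig | hle
  · rw [aExt_out n k (Or.inr hbig), aExt_out (n-1) k (Or.inr (by omega)),
      aExt_out (n-1) (k-1) (Or.inr (by omega)), aExt_out (n-2) (k-2) (Or.inr (by omega))]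
    ring
  -- 0 ≤ k ≤ n
  lift k to ℕ using hpos with k'
  have hk'n : k' ≤ n := by exact_mod_cast hle
  have hn1 : (n-1 : ℕ) ≠ 0 := by omega
  rcases Nat.eq_zero_or_pos k' with rfl | hk1
  · -- k' = 0
    rw [aExt_coe n 0 (by omega) (by omega), aExt_coe (n-1) 0 hn1 (by omega),
      aExt_out (n-1) ((0:ℕ)-1) (Or.inl (by norm_num)),
      aExt_out (n-2) ((0:ℕ)-2) (Or.inl (by norm_num))]
    simp only [Nat.mul_zero, Nat.sub_zero, Nat.choose_self,
      Nat.choose_eq_zero_of_lt (by omega : 2*n < 2*n+1),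
      Nat.choose_eq_zero_of_lt (by omega : 2*(n-1) < 2*(n-1)+1)]
    push_cast
  rcases eq_or_lt_of_le (Nat.succ_le_of_lt hk1) with h1 | hk2
  · -- k' = 1
    obtain rfl : k' = 1 := h1.symm
    have e1 : (2*n - 1 + 1 : ℕ) = (2*n - 2 + 1) + 1 := by omega
    have e2 : (2*(n-1) - 1 + 1 : ℕ) = (2*(n-1) - 2 + 1) + 1 := by omega
    rw [aExt_coe n 1 (by omega) (by omega), aExt_coe (n-1) 1 hn1 (by omega),
      show ((1:ℕ):ℤ) - 1 = ((0:ℕ):ℤ) by norm_num,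
      aExt_coe (n-1) 0 hn1 (by omega),
      aExt_out (n-2) (((1:ℕ):ℤ)-2) (Or.inl (by norm_num)),
      e1, e2]
    simp only [Nat.choose_succ_self_right, Nat.choose_self, Nat.mul_zero, Nat.sub_zero,
      Nat.choose_eq_zero_of_lt (by omega : 2*(n-1) < 2*(n-1)+1)]
    have c1 : (2*n - 1).choose (2*n - 2 + 1) = 1 := by
      rw [show (2*n - 2 + 1 : ℕ) = 2*n - 1 by omega]; exact Nat.choose_self _
    have c2 : (2*(n-1) - 1).choose (2*(n-1) - 2 + 1) = 1 := by
      rw [show (2*(n-1) - 2 + 1 : ℕ) = 2*(n-1) - 1 by omega]; exact Nat.choose_self _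
    rw [c1, c2]
    push_cast
    omega
  · rcases eq_or_lt_of_le hk'n with rfl | hklt
    · -- k' = n
      have e1 : (2*k' - k' + 1 : ℕ) = (k'-1) + 2 := by omega
      have e2 : (2*k' - 2*k' + 1 : ℕ) = 1 := by omega
      rw [aExt_coe k' k' (by omega) le_rfl,
        aExt_out (k'-1) (k':ℤ) (Or.inr (by omega)),
        show ((k':ℕ):ℤ) - 1 = ((k'-1:ℕ):ℤ) by omega,
        show ((k':ℕ):ℤ) - 2 = ((k'-2:ℕ):ℤ) by omega,
        aExt_coe (k'-1) (k'-1) (by omega) le_rfl]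
      rcases eq_or_lt_of_le hn with h2 | h3
      · obtain rfl : k' = 2 := h2.symm
        norm_num [aExt, Nat.choose]
      · have hk3 : 3 ≤ k' := by omega
        rw [aExt_coe (k'-2) (k'-2) (by omega) le_rfl]
        have e3 : (2*(k'-1) - (k'-1) + 1 : ℕ) = k' := by omega
        have e4 : (2*(k'-1) - 2*(k'-1) + 1 : ℕ) = 1 := by omega
        have e5 : (2*(k'-2) - (k'-2) + 1 : ℕ) = k'-1 := by omega
        have e6 : (2*(k'-2) - 2*(k'-2) + 1 : ℕ) = 1 := by omega
        have e7 : (2*(k'-1) - (k'-1) : ℕ) = k'-1 := by omega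
        have e8 : (2*(k'-2) - (k'-2) : ℕ) = k'-2 := by omega
        have e9 : (2*k' - k' : ℕ) = k' := by omega
        rw [e1, e2, e3, e4, e5, e6, e7, e8, e9]
        simp only [Nat.choose_one_right]
        push_cast
        omega
    · -- 2 ≤ k' ≤ n - 1
      set a : ℕ := 2*n - k' - 3 with ha
      set b : ℕ := 2*n - 2*k' - 1 with hb
      have hnk : k' + 1 ≤ n := by omega
      have e1 : (2*n - k' + 1 : ℕ) = a + 4 := by omega
      have e2 : (2*n - 2*k' + 1 : ℕ) = b + 2 := by omega
      have e3 : (2*n - k' : ℕ) = a + 3 := by omega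
      have e4 : (2*(n-1) - k' + 1 : ℕ) = a + 2 := by omega
      have e5 : (2*(n-1) - 2*k' + 1 : ℕ) = b := by omega
      have e6 : (2*(n-1) - k' : ℕ) = a + 1 := by omega
      have e7 : (2*(n-1) - (k'-1) + 1 : ℕ) = a + 3 := by omega
      have e8 : (2*(n-1) - 2*(k'-1) + 1 : ℕ) = b + 2 := by omega
      have e9 : (2*(n-1) - (k'-1) : ℕ) = a + 2 := by omega
      have e10 : (2*(n-2) - (k'-2) + 1 : ℕ) = a + 2 := by omega
      have e11 : (2*(n-2) - 2*(k'-2) + 1 : ℕ) = b + 2 := by omega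
      have e12 : (2*(n-2) - (k'-2) : ℕ) = a + 1 := by omega
      rw [aExt_coe n k' (by omega) hk'n,
        aExt_coe (n-1) k' hn1 (by omega),
        show ((k':ℕ):ℤ) - 1 = ((k'-1:ℕ):ℤ) by omega,
        show ((k':ℕ):ℤ) - 2 = ((k'-2:ℕ):ℤ) by omega,
        aExt_coe (n-1) (k'-1) hn1 (by omega),
        aExt_coe (n-2) (k'-2) (by omega) (by omega),
        e1, e2, e3, e4, e5, e6, e7, e8, e9, e10, e11, e12]
      have key2 := binom_id (a+1) b
      simp only [show (a+1)+1 = a+2 from by omega, show (a+1)+2 = a+3 from by omega,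
        show (a+1)+3 = a+4 from by omega] at key2
      omega

theorem stmt_13 (n m : ℕ) (hn : 2 ≤ n) :
    Ffun n m = Ffun (n - 1) (m + 1) + 2 * Ffun (n - 1) m - Ffun (n - 2) m := by
  obtain ⟨p, rfl⟩ : ∃ p, n = p + 2 := ⟨n - 2, by omega⟩
  have h1 : (p + 2 - 1 : ℕ) = p + 1 := rfl
  have h2 : (p + 2 - 2 : ℕ) = p := by omega
  rw [h1, h2]
  have expand : Ffun (p+2) m
      = (∑ j ∈ Finset.range (p+3), aExt (p+1) ((p+2:ℤ) - j) * bCat (m+j))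
      + 2 * (∑ j ∈ Finset.range (p+3), aExt (p+1) ((p+1:ℤ) - j) * bCat (m+j))
      - (∑ j ∈ Finset.range (p+3), aExt p ((p:ℤ) - j) * bCat (m+j)) := by
    rw [Ffun, Finset.mul_sum, ← Finset.sum_add_distrib, ← Finset.sum_sub_distrib]
    apply Finset.sum_congr rfl
    intro j hj
    have hr := aExt_rec (p+2) (by omega) (((p+2:ℕ):ℤ) - j)
    rw [show (p+2-1 : ℕ) = p+1 from rfl, show (p+2-2 : ℕ) = p from by omega,
      show ((p+2:ℕ):ℤ) - j - 1 = ((p+1:ℕ):ℤ) - j from by push_cast; ring,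
      show ((p+2:ℕ):ℤ) - j - 2 = ((p:ℕ):ℤ) - j from by push_cast; ring] at hr
    push_cast at hr ⊢
    rw [hr]; ring
  rw [expand]
  congr 1
  · congr 1
    · -- first sum = Ffun (p+1) (m+1)
      rw [Finset.sum_range_succ' (fun j => aExt (p+1) ((p+2:ℤ) - j) * bCat (m+j)) (p+2)]
      rw [aExt_out (p+1) ((p+2:ℤ) - (0:ℕ)) (Or.inr (by push_cast; omega))]
      rw [Ffun]
      simp only [zero_mul, add_zero]
      apply Finset.sum_congr rfl
      intro j hj
      congr 1
      · congr 1; push_cast; ring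
      · congr 1; omega
    · -- second sum = 2 * Ffun (p+1) m
      congr 1
      rw [Finset.sum_range_succ, aExt_out (p+1) ((p+1:ℤ) - ((p+2:ℕ):ℤ)) (Or.inl (by push_cast; omega)),
        zero_mul, add_zero, Ffun]
      apply Finset.sum_congr rfl
      intro j hj
      congr 1
  · -- third sum = Ffun p m
    rw [show (p+3 : ℕ) = (p+1) + 1 + 1 from rfl, Finset.sum_range_succ, Finset.sum_range_succ,
      aExt_out p ((p:ℤ) - ((p+1+1:ℕ):ℤ)) (Or.inl (by push_cast; omega)),
      aExt_out p ((p:ℤ) - ((p+1:ℕ):ℤ)) (Or.inl (by push_cast; omega))]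
    simp only [zero_mul, add_zero]
    rw [Ffun]
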